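/- Let q be a prime, d ≥ 2, h ≥ 0 and set κ_h = log_2(h + 2 + ⌈log_q d⌉). Let f be a random d-tuple of fractional Laurent series over ℤ_q with the d-fold Haar measure, x_n = φ({t^{n-1} f}), and let K = [0,w)\[0,v) ⊆ [0,1)^d be a box difference whose coordinates v_i, w_i are rationals with denominators q^{h+1+⌈log_q d⌉} and q^{h+2+⌈log_q d⌉} respectively. Define Δ_K(x) = 1_K(x) - λ(K). Then for any γ ∈ {0,...,2^{κ_h} - 1} and any indices n_1 < n_2 < ... < n_l all congruent to γ modulo 2^{κ_h} (so consecutive indices differ by at least h + 2 + ⌈log_q d⌉), the random variables Δ_K(x_{n_1}), ..., Δ_K(x_{n_l}) are mutually independent. -/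

import Mathlib

open MeasureTheory ProbabilityTheory

/-- `φ` applied componentwise to a `d`-tuple of fractional Laurent series over `ℤ_q`
(coefficient sequences `ℕ → ZMod q`, index `j` encoding the coefficient of `t^{-(j+1)}`). -/
noncomputable def phiVec (q : ℕ) [NeZero q] {d : ℕ} (p : Fin d → ℕ → ZMod q) :
    Fin d → ℝ :=
  fun i => ∑' j : ℕ, (((p i j).val : ℝ)) / (q : ℝ) ^ (j + 1)

/-- The axis-parallel box `[0, v)`. -/
def lowerBox {d : ℕ} (v : Fin d → ℝ) : Set (Fin d → ℝ) :=
  Set.univ.pi fun i => Set.Ico 0 (v i)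

open MeasureTheory ProbabilityTheory
open scoped ENNReal

section FiniteGroup
variable {G : Type*} [AddCommGroup G] [Fintype G] [MeasurableSpace G]
  [MeasurableSingletonClass G] [MeasurableAdd G]

lemma inv_prob_singleton (P : Measure G) [IsProbabilityMeasure P] [P.IsAddLeftInvariant]
    (x : G) : P {x} = (Fintype.card G : ℝ≥0∞)⁻¹ := by
  have hall : ∀ y : G, P {y} = P {x} := by
    intro y
    have h := measure_preimage_add P (y - x) {y}
    have hpre : ((fun h => (y - x) + h) ⁻¹' ({y} : Set G)) = {x} := by
      ext z
      simp only [Set.mem_preimage, Set.mem_singleton_iff]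
      constructor
      · intro hz
        have h2 : y - x + z = y - x + x := by rw [hz]; abel
        exact add_left_cancel h2
      · rintro rfl; abel
    rw [hpre] at h
    exact h.symm
  have huniv : P Set.univ = (Fintype.card G : ℝ≥0∞) * P {x} := by
    have : (Set.univ : Set G) = ⋃ y ∈ (Finset.univ : Finset G), {y} := by
      simp [Set.iUnion_of_singleton]
    rw [this, measure_biUnion_finset ?_ (fun y _ => measurableSet_singleton y)]
    · simp only [hall, Finset.sum_const, Finset.card_univ, nsmul_eq_mul, Nat.cast_id]
    · intro a _ b _ hab
      simp [Function.onFun, Set.disjoint_singleton, hab]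
  rw [measure_univ] at huniv
  have hcard0 : (Fintype.card G : ℝ≥0∞) ≠ 0 := by
    simp [Fintype.card_ne_zero]
  have hcardt : (Fintype.card G : ℝ≥0∞) ≠ ⊤ := by simp
  calc P {x} = ((Fintype.card G : ℝ≥0∞)⁻¹ * (Fintype.card G : ℝ≥0∞)) * P {x} := by
        rw [ENNReal.inv_mul_cancel hcard0 hcardt, one_mul]
    _ = (Fintype.card G : ℝ≥0∞)⁻¹ := by rw [mul_assoc, ← huniv, mul_one]

lemma inv_prob_eq (P Q : Measure G) [IsProbabilityMeasure P] [IsProbabilityMeasure Q]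
    [P.IsAddLeftInvariant] [Q.IsAddLeftInvariant] : P = Q := by
  ext s hs
  classical
  have hsfin : s = ⋃ y ∈ s.toFinset, ({y} : Set G) := by simp
  rw [hsfin, measure_biUnion_finset ?_ (fun y _ => measurableSet_singleton y),
    measure_biUnion_finset ?_ (fun y _ => measurableSet_singleton y)]
  · simp [inv_prob_singleton P, inv_prob_singleton Q]
  · intro a _ b _ hab; simp [Function.onFun, Set.disjoint_singleton, hab]
  · intro a _ b _ hab; simp [Function.onFun, Set.disjoint_singleton, hab]

end FiniteGroup

section MapInv
variable {Ω : Type*} [MeasurableSpace Ω] (ν : Measure Ω)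
  {G : Type*} [AddCommGroup G] [Fintype G] [MeasurableSpace G] [MeasurableSingletonClass G]

lemma map_isAddLeftInvariant (T : Ω → G) (hT : Measurable T)
    (hsec : ∀ c : G, ∃ τ : Ω → Ω, (∀ s : Set Ω, ν (τ ⁻¹' s) = ν s) ∧ ∀ f, T (τ f) = c + T f) :
    (ν.map T).IsAddLeftInvariant := by
  constructor
  intro c
  ext A hA
  obtain ⟨τ, hτinv, hτ⟩ := hsec c
  rw [Measure.map_apply (measurable_of_countable _) hA,
    Measure.map_apply hT (((measurable_of_countable (c + ·))) hA),
    Measure.map_apply hT hA]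
  have : T ⁻¹' ((fun x => c + x) ⁻¹' A) = τ ⁻¹' (T ⁻¹' A) := by
    ext f; simp [hτ f]
  rw [this, hτinv]

end MapInv

section Transfer
lemma iIndepFun_of_ae_eq {Ω ι : Type*} [Countable ι] [MeasurableSpace Ω] {μ : Measure Ω}
    {β : ι → Type*} {m : ∀ i, MeasurableSpace (β i)} {f g : ∀ i, Ω → β i}
    (hf : iIndepFun (m := m) f μ) (h : ∀ᵐ ω ∂μ, ∀ i, f i ω = g i ω) : iIndepFun (m := m) g μ := by
  rw [iIndepFun_iff_measure_inter_preimage_eq_mul] at hf ⊢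
  intro S sets hsets
  have h1 : μ (⋂ i ∈ S, g i ⁻¹' sets i) = μ (⋂ i ∈ S, f i ⁻¹' sets i) := by
    refine measure_congr ?_
    filter_upwards [h] with ω hω
    change (ω ∈ ⋂ i ∈ S, g i ⁻¹' sets i) = (ω ∈ ⋂ i ∈ S, f i ⁻¹' sets i)
    simp only [Set.mem_iInter, Set.mem_preimage]
    exact eq_iff_iff.mpr (forall_congr' fun j => forall_congr' fun hj => by rw [hω j])
  have h2 : ∀ i ∈ S, μ (g i ⁻¹' sets i) = μ (f i ⁻¹' sets i) := by
    intro i _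
    refine measure_congr ?_
    filter_upwards [h] with ω hω
    change (ω ∈ g i ⁻¹' sets i) = (ω ∈ f i ⁻¹' sets i)
    simp only [Set.mem_preimage, hω i]
  rw [h1, hf S hsets]
  exact (Finset.prod_congr rfl h2).symm
end Transfer
open MeasureTheory

section Digits
variable {q : ℕ}

lemma digit_geom_summable (hq : 2 ≤ q) : Summable (fun j : ℕ => ((1:ℝ)/q) ^ j) := by
  have hq0 : (0:ℝ) < q := by positivity
  exact summable_geometric_of_lt_one (by positivity)
    (by rw [div_lt_one hq0]; exact_mod_cast hq)

lemma digit_summable (hq : 2 ≤ q) {a : ℕ → ℕ} (ha : ∀ j, a j < q) :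
    Summable (fun j : ℕ => (a j : ℝ) / (q : ℝ) ^ (j + 1)) := by
  have hq0 : (0:ℝ) < q := by positivity
  refine Summable.of_nonneg_of_le (fun j => by positivity) (fun j => ?_)
    (digit_geom_summable hq)
  rw [div_pow, one_pow, div_le_div_iff₀ (by positivity) (by positivity)]
  have h1 : (a j : ℝ) ≤ (q : ℝ) := by exact_mod_cast (ha j).le
  have h2 : (0:ℝ) < (q:ℝ)^j := by positivity
  rw [one_mul, pow_succ]
  nlinarith

lemma digit_tsum_nonneg (a : ℕ → ℕ) :
    (0:ℝ) ≤ ∑' j : ℕ, (a j : ℝ) / (q : ℝ) ^ (j + 1) :=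
  tsum_nonneg (fun j => by positivity)

lemma digit_partial_eq (hq : 2 ≤ q) (a : ℕ → ℕ) (m : ℕ) :
    ((∑ k ∈ Finset.range m, a k * q ^ (m - 1 - k) : ℕ) : ℝ) / (q:ℝ) ^ m
      = ∑ k ∈ Finset.range m, (a k : ℝ) / (q:ℝ) ^ (k + 1) := by
  have hq0 : (0:ℝ) < q := by positivity
  push_cast
  rw [Finset.sum_div]
  refine Finset.sum_congr rfl ?_
  intro k hk
  rw [Finset.mem_range] at hk
  rw [div_eq_div_iff (by positivity) (by positivity)]
  rw [mul_assoc, ← pow_add]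
  congr 2
  omega

lemma digit_tail_lt (hq : 2 ≤ q) {a : ℕ → ℕ} (ha : ∀ j, a j < q) {m : ℕ}
    (hgood : ∃ j, a (j + m) ≠ q - 1) :
    (∑' j : ℕ, (a (j + m) : ℝ) / (q : ℝ) ^ (j + m + 1)) < 1 / (q:ℝ)^m := by
  have hq0 : (0:ℝ) < q := by positivity
  obtain ⟨j0, hj0⟩ := hgood
  have hsum : Summable (fun j : ℕ => (a (j + m) : ℝ) / (q : ℝ) ^ (j + m + 1)) := by
    exact (digit_summable hq ha).comp_injective (add_left_injective m)
  have hgsum : Summable (fun j : ℕ => ((q - 1 : ℕ) : ℝ) / (q : ℝ) ^ (j + m + 1)) := by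
    have h := (digit_geom_summable hq).mul_left (((q - 1 : ℕ) : ℝ) / (q:ℝ)^(m+1))
    refine h.congr ?_
    intro j
    rw [div_pow, one_pow, div_mul_div_comm, mul_one, ← pow_add]
    ring
  have hlt : (∑' j : ℕ, (a (j + m) : ℝ) / (q : ℝ) ^ (j + m + 1))
      < ∑' j : ℕ, ((q - 1 : ℕ) : ℝ) / (q : ℝ) ^ (j + m + 1) := by
    refine Summable.tsum_lt_tsum (i := j0) (fun j => ?_) ?_ hsum hgsum
    · have : a (j + m) ≤ q - 1 := by have := ha (j + m); omega
      gcongr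
    · show (a (j0 + m) : ℝ) / _ < _
      have : a (j0 + m) < q - 1 := by have := ha (j0 + m); omega
      gcongr
  refine hlt.trans_eq ?_
  have hrw : ∀ j : ℕ, ((q - 1 : ℕ) : ℝ) / (q : ℝ) ^ (j + m + 1)
      = (((q - 1 : ℕ) : ℝ) / (q:ℝ)^(m+1)) * ((1:ℝ)/q)^j := by
    intro j
    rw [div_pow, one_pow, div_mul_div_comm, mul_one, ← pow_add]
    ring
  rw [tsum_congr hrw, tsum_mul_left, tsum_geometric_of_lt_one (by positivity)
    (by rw [div_lt_one hq0]; exact_mod_cast hq)]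
  have hq1 : ((q - 1 : ℕ) : ℝ) = (q:ℝ) - 1 := by
    have : 1 ≤ q := by omega
    push_cast [this]; ring
  rw [hq1]
  have hqne : (q:ℝ) ≠ 0 := ne_of_gt hq0
  have hq1ne : (q:ℝ) - 1 ≠ 0 := by
    have : (1:ℝ) < q := by exact_mod_cast hq.trans_lt' one_lt_two
    linarith
  field_simp
  ring
end Digits

lemma digit_lt_iff (hq : 2 ≤ q) {a : ℕ → ℕ} (ha : ∀ j, a j < q) {m : ℕ}
    (hgood : ∃ j, a (j + m) ≠ q - 1) (b : ℕ) :
    (∑' j : ℕ, (a j : ℝ) / (q : ℝ) ^ (j + 1)) < (b : ℝ) / (q:ℝ) ^ m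
      ↔ (∑ k ∈ Finset.range m, a k * q ^ (m - 1 - k)) < b := by
  have hq0 : (0:ℝ) < q := by positivity
  have hsum := digit_summable hq ha
  set c : ℕ := ∑ k ∈ Finset.range m, a k * q ^ (m - 1 - k) with hc
  have key2 : (c:ℝ) / (q:ℝ)^m ≤ ∑' j : ℕ, (a j : ℝ) / (q : ℝ) ^ (j + 1) := by
    rw [digit_partial_eq hq a m]
    exact Summable.sum_le_tsum (Finset.range m) (fun j _ => by positivity) hsum
  have key3 : (∑' j : ℕ, (a j : ℝ) / (q : ℝ) ^ (j + 1)) < ((c:ℝ) + 1) / (q:ℝ)^m := by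
    rw [← Summable.sum_add_tsum_nat_add m hsum, ← digit_partial_eq hq a m]
    have htail := digit_tail_lt hq ha hgood
    rw [add_div]
    gcongr
  constructor
  · intro hx
    have hlt : (c:ℝ) / (q:ℝ)^m < (b:ℝ) / (q:ℝ)^m := lt_of_le_of_lt key2 hx
    have : (c:ℝ) < (b:ℝ) := by
      rw [div_lt_div_iff_of_pos_right (by positivity)] at hlt
      exact hlt
    exact_mod_cast this
  · intro hcb
    refine key3.trans_le ?_
    have hcb' : ((c:ℝ) + 1) ≤ (b:ℝ) := by exact_mod_cast hcb
    gcongr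

set_option maxHeartbeats 2000000 in
/-- let `K = [0,w) \ [0,v)` with coordinates on the grids with denominators
`q^{h+1+⌈log_q d⌉}` and `q^{h+2+⌈log_q d⌉}`, let `Δ_K(x) = 1_K(x) - λ(K)`, and let
`x_n(f) = φ({t^{n-1} f})` (coefficient shift by `n-1`).  For indices
`n_1 < ⋯ < n_l`, all `≥ 1` and congruent to `γ` modulo `2^{κ_h} = h + 2 + ⌈log_q d⌉`,
the random variables `Δ_K(x_{n_1}), …, Δ_K(x_{n_l})` are mutually independent with respect
to the `d`-fold normalized Haar measure.  Here `⌈log_q d⌉ = Nat.clog q d`. -/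
theorem stmt18 (q : ℕ) (hq : q.Prime) (d h : ℕ) (hd : 2 ≤ d)
    [MeasurableSpace (ℕ → ZMod q)] [BorelSpace (ℕ → ZMod q)]
    (μ : Measure (ℕ → ZMod q)) [μ.IsAddHaarMeasure] [IsProbabilityMeasure μ]
    (v w : Fin d → ℝ)
    (hv : ∀ i, ∃ a : ℕ, a ≤ q ^ (h + 1 + Nat.clog q d) ∧
        v i = (a : ℝ) / (q : ℝ) ^ (h + 1 + Nat.clog q d))
    (hw : ∀ i, ∃ b : ℕ, b ≤ q ^ (h + 2 + Nat.clog q d) ∧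
        w i = (b : ℝ) / (q : ℝ) ^ (h + 2 + Nat.clog q d))
    (γ : ℕ) (hγ : γ < h + 2 + Nat.clog q d)
    (l : ℕ) (n : Fin l → ℕ) (hmono : StrictMono n)
    (hpos : ∀ r, 1 ≤ n r) (hcong : ∀ r, n r % (h + 2 + Nat.clog q d) = γ) :
    haveI : NeZero q := ⟨hq.ne_zero⟩
    iIndepFun (m := fun _ : Fin l => (inferInstance : MeasurableSpace ℝ))
      (fun r => fun f : Fin d → ℕ → ZMod q =>
        Set.indicator (lowerBox w \ lowerBox v) (fun _ => (1 : ℝ))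
            (phiVec q (fun i j => f i (j + (n r - 1)))) -
          (volume (lowerBox w \ lowerBox v)).toReal)
      (Measure.pi (fun _ : Fin d => μ)) := by
  haveI : NeZero q := ⟨hq.ne_zero⟩
  classical
  have hq2 : 2 ≤ q := hq.two_le
  set m : ℕ := h + 2 + Nat.clog q d with hm
  have hm2 : 2 ≤ m := by omega
  set ν : Measure (Fin d → ℕ → ZMod q) := Measure.pi (fun _ : Fin d => μ) with hν
  set K : Set (Fin d → ℝ) := lowerBox w \ lowerBox v with hK
  set C : ℝ := (volume K).toReal with hC
  -- block disjointness
  have hblock : ∀ (r r' : Fin l) (k k' : Fin m),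
      (k : ℕ) + (n r - 1) = (k' : ℕ) + (n r' - 1) → r = r' ∧ k = k' := by
    have hdvd : ∀ s t : Fin l, s < t → m ≤ n t - n s := by
      intro s t hst
      have hlt : n s < n t := hmono hst
      have hmod : n s % m = n t % m := by rw [hcong s, hcong t]
      have hdvd' : m ∣ n t - n s := (Nat.modEq_iff_dvd' hlt.le).mp hmod
      exact Nat.le_of_dvd (by omega) hdvd'
    intro r r' k k' hkk
    rcases lt_trichotomy r r' with hlt | heq | hlt
    · have h1 := hdvd r r' hlt; have h2 := hmono hlt
      have h3 := k.isLt; have h4 := k'.isLt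
      have h5 := hpos r; have h6 := hpos r'
      omega
    · subst heq
      refine ⟨rfl, Fin.ext ?_⟩
      have h5 := hpos r
      omega
    · have h1 := hdvd r' r hlt; have h2 := hmono hlt
      have h3 := k.isLt; have h4 := k'.isLt
      have h5 := hpos r; have h6 := hpos r'
      omega
  -- the block restriction maps
  set R : Fin l → (Fin d → ℕ → ZMod q) → (Fin d × Fin m → ZMod q) :=
    fun r f p => f p.1 ((p.2 : ℕ) + (n r - 1)) with hRdef
  have hRmeas : ∀ r, Measurable (R r) := by
    intro r
    refine measurable_pi_lambda _ (fun p => ?_)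
    exact ((continuous_apply ((p.2 : ℕ) + (n r - 1))).measurable).comp
      (measurable_pi_apply (a := p.1) (X := fun _ : Fin d => ℕ → ZMod q))
  -- translation invariance of ν
  have hνinv : ∀ (c' : Fin d → ℕ → ZMod q) (s : Set (Fin d → ℕ → ZMod q)),
      ν ((fun f => c' + f) ⁻¹' s) = ν s := by
    intro c' s
    exact measure_preimage_add ν c' s
  -- invariance of the block restrictions
  have hRinv : ∀ r, (ν.map (R r)).IsAddLeftInvariant := by
    intro r
    refine map_isAddLeftInvariant ν (R r) (hRmeas r) (fun c => ?_)
    refine ⟨(fun f => (fun i j => if hj : ∃ k : Fin m, (k : ℕ) + (n r - 1) = j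
        then c (i, hj.choose) else 0) + f), hνinv _, ?_⟩
    intro f
    funext p
    show (if hj : ∃ k : Fin m, (k : ℕ) + (n r - 1) = (p.2 : ℕ) + (n r - 1)
        then c (p.1, hj.choose) else 0) + f p.1 ((p.2 : ℕ) + (n r - 1))
        = c p + f p.1 ((p.2 : ℕ) + (n r - 1))
    refine congrArg (fun z => z + f p.1 ((p.2 : ℕ) + (n r - 1))) ?_
    rw [dif_pos ⟨p.2, rfl⟩]
    have hch := (⟨p.2, rfl⟩ : ∃ k : Fin m, (k : ℕ) + (n r - 1) = (p.2 : ℕ) + (n r - 1)).choose_spec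
    have : (⟨p.2, rfl⟩ : ∃ k : Fin m, (k : ℕ) + (n r - 1) = (p.2 : ℕ) + (n r - 1)).choose = p.2 :=
      Fin.ext (by omega)
    rw [this]
  -- the joint map
  set J : (Fin d → ℕ → ZMod q) → (Fin l → (Fin d × Fin m → ZMod q)) :=
    fun f r => R r f with hJdef
  have hJmeas : Measurable J := measurable_pi_lambda _ (fun r => hRmeas r)
  have hJinv : (ν.map J).IsAddLeftInvariant := by
    refine map_isAddLeftInvariant ν J hJmeas (fun c => ?_)
    refine ⟨(fun f => (fun i j => if hj : ∃ p : Fin l × Fin m, (p.2 : ℕ) + (n p.1 - 1) = j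
        then c hj.choose.1 (i, hj.choose.2) else 0) + f), hνinv _, ?_⟩
    intro f
    funext r p
    show (if hj : ∃ u : Fin l × Fin m, (u.2 : ℕ) + (n u.1 - 1) = (p.2 : ℕ) + (n r - 1)
        then c hj.choose.1 (p.1, hj.choose.2) else 0) + f p.1 ((p.2 : ℕ) + (n r - 1))
        = c r p + f p.1 ((p.2 : ℕ) + (n r - 1))
    refine congrArg (fun z => z + f p.1 ((p.2 : ℕ) + (n r - 1))) ?_
    rw [dif_pos ⟨(r, p.2), rfl⟩]
    have hex : ∃ u : Fin l × Fin m, (u.2 : ℕ) + (n u.1 - 1) = (p.2 : ℕ) + (n r - 1) :=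
      ⟨(r, p.2), rfl⟩
    obtain ⟨hr1, hr2⟩ := hblock hex.choose.1 r hex.choose.2 p.2 hex.choose_spec
    rw [hr1, hr2]
  haveI hνprob : IsProbabilityMeasure ν := by infer_instance
  haveI hRprob : ∀ r, IsProbabilityMeasure (ν.map (R r)) := fun r =>
    Measure.isProbabilityMeasure_map (hRmeas r).aemeasurable
  haveI hJprob : IsProbabilityMeasure (ν.map J) := Measure.isProbabilityMeasure_map hJmeas.aemeasurable
  -- independence of the block restrictions
  have hRindep : iIndepFun (m := fun _ : Fin l =>
      (inferInstance : MeasurableSpace (Fin d × Fin m → ZMod q))) R ν := by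
    rw [iIndepFun_iff_measure_inter_preimage_eq_mul]
    intro S sets hsets
    haveI : MeasurableAdd (Fin l → (Fin d × Fin m → ZMod q)) :=
      ⟨fun _ => measurable_of_countable _, fun _ => measurable_of_countable _⟩
    haveI : MeasurableAdd (Fin d × Fin m → ZMod q) :=
      ⟨fun _ => measurable_of_countable _, fun _ => measurable_of_countable _⟩
    haveI := hJinv
    haveI := fun r => hRinv r
    have hJpi : ν.map J = Measure.pi (fun r => ν.map (R r)) := inv_prob_eq _ _
    have hpiS : (⋂ r ∈ S, R r ⁻¹' sets r) = J ⁻¹' (Set.pi ↑S sets) := by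
      ext f
      simp [Set.mem_pi, hJdef]
    have hBmeas : MeasurableSet (Set.pi (↑S : Set (Fin l)) sets) :=
      MeasurableSet.pi S.countable_toSet (fun r hr => hsets r hr)
    rw [hpiS, ← Measure.map_apply hJmeas hBmeas, hJpi]
    have hsplit : (Set.pi (↑S : Set (Fin l)) sets)
        = Set.univ.pi (fun r => if r ∈ S then sets r else Set.univ) := by
      ext x
      simp only [Set.mem_pi, Set.mem_univ, true_implies, Finset.mem_coe]
      constructor
      · intro hx r
        by_cases hr : r ∈ S
        · simpa [hr] using hx r hr
        · simp [hr]
      · intro hx r hr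
        simpa [hr] using hx r
    rw [hsplit, Measure.pi_pi]
    have : ∀ r : Fin l, (ν.map (R r)) (if r ∈ S then sets r else Set.univ)
        = if r ∈ S then (ν.map (R r)) (sets r) else 1 := by
      intro r
      by_cases hr : r ∈ S <;> simp [hr]
    rw [Finset.prod_congr rfl (fun r _ => this r), Finset.prod_ite_mem Finset.univ S
      (fun r => (ν.map (R r)) (sets r)), Finset.univ_inter]
    exact Finset.prod_congr rfl (fun r hr => Measure.map_apply (hRmeas r) (hsets r hr))
  -- the discretized observable
  set g : (Fin d × Fin m → ZMod q) → ℝ := fun p =>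
    Set.indicator K (fun _ => (1 : ℝ))
      (fun i => ∑ k : Fin m, ((p (i, k)).val : ℝ) / (q : ℝ) ^ ((k : ℕ) + 1)) - C with hgdef
  have hcomp : iIndepFun (m := fun _ : Fin l => (inferInstance : MeasurableSpace ℝ))
      (fun r => g ∘ R r) ν :=
    hRindep.comp (fun _ => g) (fun _ => measurable_of_countable g)
  -- null set where tails are all (q-1)
  have hbadsmall : ∀ (i0 : Fin d) (N0 : ℕ),
      ν {f : Fin d → ℕ → ZMod q | ∀ j : ℕ, f i0 (j + N0) = ((q - 1 : ℕ) : ZMod q)} = 0 := by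
    intro i0 N0
    set bad := {f : Fin d → ℕ → ZMod q | ∀ j : ℕ, f i0 (j + N0) = ((q - 1 : ℕ) : ZMod q)}
    have hle : ∀ T : ℕ, ν bad ≤ ((q : ℝ≥0∞))⁻¹ ^ T := by
      intro T
      set ρ : (Fin d → ℕ → ZMod q) → (Fin T → ZMod q) :=
        fun f k => f i0 ((k : ℕ) + N0) with hρdef
      have hρmeas : Measurable ρ := by
        refine measurable_pi_lambda _ (fun k => ?_)
        show Measurable fun f : Fin d → ℕ → ZMod q => f i0 ((k : ℕ) + N0)
        exact ((continuous_apply ((k : ℕ) + N0)).measurable).comp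
          (measurable_pi_apply (a := i0) (X := fun _ : Fin d => ℕ → ZMod q))
      haveI hρinv : (ν.map ρ).IsAddLeftInvariant := by
        refine map_isAddLeftInvariant ν ρ hρmeas (fun c => ?_)
        refine ⟨(fun f => (fun i j => if hj : i = i0 ∧ ∃ k : Fin T, (k : ℕ) + N0 = j
            then c hj.2.choose else 0) + f), hνinv _, ?_⟩
        intro f
        funext k
        show (if hj : i0 = i0 ∧ ∃ k' : Fin T, (k' : ℕ) + N0 = (k : ℕ) + N0
            then c hj.2.choose else 0) + f i0 ((k : ℕ) + N0) = c k + f i0 ((k : ℕ) + N0)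
        refine congrArg (fun z => z + f i0 ((k : ℕ) + N0)) ?_
        rw [dif_pos ⟨rfl, ⟨k, rfl⟩⟩]
        have hex : ∃ k' : Fin T, (k' : ℕ) + N0 = (k : ℕ) + N0 := ⟨k, rfl⟩
        have : hex.choose = k := Fin.ext (by have := hex.choose_spec; omega)
        exact congrArg (fun z => c z) this
      haveI : IsProbabilityMeasure (ν.map ρ) := Measure.isProbabilityMeasure_map hρmeas.aemeasurable
      haveI : MeasurableAdd (Fin T → ZMod q) :=
        ⟨fun _ => measurable_of_countable _, fun _ => measurable_of_countable _⟩
      have hsub : bad ⊆ ρ ⁻¹' {fun _ => ((q - 1 : ℕ) : ZMod q)} := by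
        intro f hf
        simp only [Set.mem_preimage, Set.mem_singleton_iff]
        funext k
        exact hf (k : ℕ)
      refine (measure_mono hsub).trans ?_
      rw [← Measure.map_apply hρmeas (measurableSet_singleton _),
        inv_prob_singleton (ν.map ρ) _]
      rw [Fintype.card_fun]
      simp only [Fintype.card_fin, ZMod.card]
      rw [← ENNReal.inv_pow]
      exact le_of_eq (by norm_cast)
    have htend : Filter.Tendsto (fun T : ℕ => ((q : ℝ≥0∞))⁻¹ ^ T) Filter.atTop (nhds 0) :=
      ENNReal.tendsto_pow_atTop_nhds_zero_of_lt_one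
        (ENNReal.inv_lt_one.mpr (by exact_mod_cast hq2.trans_lt' one_lt_two))
    have := ge_of_tendsto' htend hle
    simpa using le_antisymm this zero_le
  -- the full bad set
  set Bad : Set (Fin d → ℕ → ZMod q) :=
    ⋃ (r : Fin l), ⋃ (i : Fin d),
      {f | ∀ j : ℕ, f i (j + (m + (n r - 1))) = ((q - 1 : ℕ) : ZMod q)} with hBad
  have hBadnull : ν Bad = 0 :=
    measure_iUnion_null (fun r => measure_iUnion_null (fun i => hbadsmall i (m + (n r - 1))))
  have hae0 : ∀ᵐ f ∂ν, f ∉ Bad := (measure_eq_zero_iff_ae_notMem).mp hBadnull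
  choose b hble hwb using hw
  choose a' hale hva using hv
  have hvq : ∀ i, v i = ((a' i * q : ℕ) : ℝ) / (q : ℝ) ^ m := by
    intro i
    rw [hva i]
    have hqne : (q : ℝ) ≠ 0 := by positivity
    have hmeq : m = (h + 1 + Nat.clog q d) + 1 := by omega
    rw [hmeq, pow_succ]
    push_cast
    field_simp
  have hmemBox : ∀ (u z : Fin d → ℝ), z ∈ lowerBox u ↔ ∀ i, 0 ≤ z i ∧ z i < u i := by
    intro u z
    simp [lowerBox, Set.mem_pi]
  refine iIndepFun_of_ae_eq hcomp ?_
  filter_upwards [hae0] with f hf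
  intro r
  set a : Fin d → ℕ → ℕ := fun i j => (f i (j + (n r - 1))).val with hadef
  have ha : ∀ i j, a i j < q := fun i j => ZMod.val_lt _
  have hgood : ∀ i, ∃ j, a i (j + m) ≠ q - 1 := by
    intro i
    by_contra hcon
    push_neg at hcon
    apply hf
    refine Set.mem_iUnion.mpr ⟨r, Set.mem_iUnion.mpr ⟨i, ?_⟩⟩
    intro j
    have h1 : a i (j + m) = q - 1 := hcon j
    have hvinj : Function.Injective (ZMod.val (n := q)) := by
      intro x y hxy
      rw [← ZMod.natCast_rightInverse x, ← ZMod.natCast_rightInverse y, hxy]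
    have h2 : f i ((j + m) + (n r - 1)) = ((q - 1 : ℕ) : ZMod q) := by
      apply hvinj
      rw [ZMod.val_cast_of_lt (by omega : q - 1 < q)]
      exact h1
    have h3 : (j + m) + (n r - 1) = j + (m + (n r - 1)) := by omega
    rw [← h3]
    exact h2
  set c : Fin d → ℕ := fun i => ∑ k ∈ Finset.range m, a i k * q ^ (m - 1 - k) with hcdef
  set xp : Fin d → ℝ := phiVec q (fun i j => f i (j + (n r - 1))) with hxpdef
  set Pt : Fin d → ℝ := fun i => (c i : ℝ) / (q : ℝ) ^ m with hPtdef
  have hx0 : ∀ i, 0 ≤ xp i := fun i => digit_tsum_nonneg (a i)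
  have hp0 : ∀ i, 0 ≤ Pt i := fun i => by positivity
  have hxw : ∀ i, xp i < w i ↔ c i < b i := by
    intro i
    rw [hwb i]
    exact digit_lt_iff hq2 (ha i) (hgood i) (b i)
  have hxv : ∀ i, xp i < v i ↔ c i < a' i * q := by
    intro i
    rw [hvq i]
    exact digit_lt_iff hq2 (ha i) (hgood i) (a' i * q)
  have hdivlt : ∀ (c' b' : ℕ), ((c' : ℝ) / (q:ℝ)^m < (b' : ℝ) / (q:ℝ)^m ↔ c' < b') := by
    intro c' b'
    rw [div_lt_div_iff_of_pos_right (by positivity)]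
    exact Nat.cast_lt
  have hpw : ∀ i, Pt i < w i ↔ c i < b i := by
    intro i
    rw [hwb i]
    exact hdivlt (c i) (b i)
  have hpv : ∀ i, Pt i < v i ↔ c i < a' i * q := by
    intro i
    rw [hvq i]
    exact hdivlt (c i) (a' i * q)
  have hmemx : xp ∈ K ↔ Pt ∈ K := by
    rw [hK]
    simp only [Set.mem_diff, hmemBox]
    constructor
    · rintro ⟨h1, h2⟩
      refine ⟨fun i => ⟨hp0 i, (hpw i).mpr ((hxw i).mp (h1 i).2)⟩, fun hcon => h2 ?_⟩
      exact fun i => ⟨hx0 i, (hxv i).mpr ((hpv i).mp (hcon i).2)⟩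
    · rintro ⟨h1, h2⟩
      refine ⟨fun i => ⟨hx0 i, (hxw i).mpr ((hpw i).mp (h1 i).2)⟩, fun hcon => h2 ?_⟩
      exact fun i => ⟨hp0 i, (hpv i).mpr ((hxv i).mp (hcon i).2)⟩
  show g (R r f) = _
  have hPteq : (fun i => ∑ k : Fin m, (((R r f) (i, k)).val : ℝ) / (q : ℝ) ^ ((k : ℕ) + 1)) = Pt := by
    funext i
    rw [hPtdef]
    show ∑ k : Fin m, ((a i (k : ℕ) : ℕ) : ℝ) / (q : ℝ) ^ ((k : ℕ) + 1) = (c i : ℝ) / (q:ℝ)^m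
    rw [Fin.sum_univ_eq_sum_range (fun k => ((a i k : ℕ) : ℝ) / (q : ℝ) ^ (k + 1)) m]
    exact (digit_partial_eq hq2 (a i) m).symm
  have hgR : g (R r f) = Set.indicator K (fun _ => (1:ℝ)) Pt - C := by
    rw [hgdef]
    simp only []
    rw [hPteq]
  rw [hgR]
  have hind : Set.indicator K (fun _ => (1:ℝ)) Pt = Set.indicator K (fun _ => (1:ℝ)) xp := by
    by_cases hx : xp ∈ K
    · rw [Set.indicator_of_mem hx, Set.indicator_of_mem (hmemx.mp hx)]
    · rw [Set.indicator_of_notMem hx, Set.indicator_of_notMem (fun hc => hx (hmemx.mpr hc))]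
  rw [hind]
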